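/- Let C be a covering of a finite set U and define the relation R on U by x R y iff y ∈ cl_{M(C)}({x}), where M(C) is the transversal matroid induced by C. Then R is an equivalence relation on U. -/

import Mathlib

open Set

/-- The rank function of a matroid: the maximum cardinality of an independent subset. -/
noncomputable def mrk {α : Type*} (M : Matroid α) (X : Set α) : ℕ :=
  sSup {n : ℕ | ∃ I ⊆ X, M.Indep I ∧ I.ncard = n}

/-- `M` is the transversal matroid (on ground set `univ`) induced by the family `𝒞` of
subsets: independent sets are exactly the partial transversals of `𝒞`. -/
def IsTransversalMatroidOf {α : Type*} (M : Matroid α) (𝒞 : Set (Set α)) : Prop :=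
  M.E = Set.univ ∧
    ∀ I : Set α, M.Indep I ↔
      ∃ f : α → Set α, Set.InjOn f I ∧ ∀ x ∈ I, f x ∈ 𝒞 ∧ x ∈ f x

/-- A hyperplane of a matroid on ground set `univ`: a flat of rank `r(U) - 1`. -/
def IsHyperplaneOf {α : Type*} (M : Matroid α) (H : Set α) : Prop :=
  M.IsFlat H ∧ mrk M H = mrk M Set.univ - 1

theorem closure_relation_equivalence {α : Type*} [Fintype α]
    (𝒞 : Set (Set α)) (hne : ∅ ∉ 𝒞) (hcov : ⋃₀ 𝒞 = Set.univ)
    (M : Matroid α) (hM : IsTransversalMatroidOf M 𝒞) :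
    Equivalence (fun x y : α => y ∈ M.closure {x}) := by
  obtain ⟨hE, hInd⟩ := hM
  -- every singleton is independent
  have hsing : ∀ x : α, M.Indep {x} := by
    intro x
    have hx : x ∈ ⋃₀ 𝒞 := hcov ▸ mem_univ x
    obtain ⟨S, hS, hxS⟩ := hx
    refine (hInd {x}).2 ⟨fun _ => S, ?_, ?_⟩
    · intro a ha b hb _
      rw [mem_singleton_iff] at ha hb; rw [ha, hb]
    · intro a ha
      rw [mem_singleton_iff] at ha; subst ha; exact ⟨hS, hxS⟩
  constructor
  · intro x
    exact M.subset_closure {x} (by simp [hE]) rfl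
  · intro x y h
    rcases eq_or_ne y x with rfl | hne'
    · exact h
    have h1 := ((hsing x).mem_closure_iff).1 h
    rcases h1 with hdep | hmem
    · apply ((hsing y).mem_closure_iff).2
      left
      have : insert x {y} = insert y ({x} : Set α) := by
        ext; simp [or_comm]
      rw [this]
      exact hdep
    · exact absurd hmem hne'
  · intro x y z hxy hyz
    have : M.closure {y} ⊆ M.closure {x} :=
      M.closure_subset_closure_of_subset_closure (by simpa using hxy)
    exact this hyz
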